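/- Let G be the presented group ⟨a, t | t a t⁻¹ = a²⟩ (the Baumslag–Solitar group BS(1,2)), and let ε : G → ℤ be the homomorphism determined by a ↦ 0 and t ↦ 1. Then the kernel of ε is isomorphic, as a group, to the additive group ℤ[1/2] = {q : ℚ | ∃ m : ℤ, ∃ n : ℕ, q = m / 2ⁿ}; in particular, ker ε is not finitely generated. -/

import Mathlib

/-- The additive group `ℤ[1/2]` of dyadic rationals `m / 2ⁿ`. -/
def dyadic : AddSubgroup ℚ where
  carrier := {q : ℚ | ∃ m : ℤ, ∃ n : ℕ, q = m / 2 ^ n}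
  zero_mem' := ⟨0, 0, by norm_num⟩
  add_mem' := by
    rintro a b ⟨m₁, n₁, rfl⟩ ⟨m₂, n₂, rfl⟩
    refine ⟨m₁ * 2 ^ n₂ + m₂ * 2 ^ n₁, n₁ + n₂, ?_⟩
    have h₁ : (2 : ℚ) ^ n₁ ≠ 0 := by positivity
    have h₂ : (2 : ℚ) ^ n₂ ≠ 0 := by positivity
    field_simp
    push_cast
    ring_nf
  neg_mem' := by
    rintro a ⟨m, n, rfl⟩
    exact ⟨-m, n, by push_cast; ring⟩

/-- The relator `t a t⁻¹ a⁻²` of the Baumslag–Solitar group `BS(1,2)`,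
with `a = of 0` and `t = of 1`. -/
def bsRel : FreeGroup (Fin 2) :=
  FreeGroup.of 1 * FreeGroup.of 0 * (FreeGroup.of 1)⁻¹ * (FreeGroup.of 0)⁻¹ *
    (FreeGroup.of 0)⁻¹

/-- The homomorphism `ε : BS(1,2) → ℤ` determined by `a ↦ 0`, `t ↦ 1`. -/
def bsEps : PresentedGroup ({bsRel} : Set (FreeGroup (Fin 2))) →* Multiplicative ℤ :=
  PresentedGroup.toGroup
    (f := fun i : Fin 2 => if i = 0 then 1 else Multiplicative.ofAdd 1)
    (by
      intro r hr
      simp only [Set.mem_singleton_iff] at hr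
      subst hr
      simp [bsRel])



abbrev BS := PresentedGroup ({bsRel} : Set (FreeGroup (Fin 2)))

noncomputable def bsA : BS := PresentedGroup.of 0
noncomputable def bsT : BS := PresentedGroup.of 1

theorem bs_rel : bsT * bsA * bsT⁻¹ = bsA * bsA := by
  have h : (QuotientGroup.mk bsRel : BS) = 1 := by
    rw [QuotientGroup.eq_one_iff]
    exact Subgroup.subset_normalClosure (Set.mem_singleton _)
  have h2 : bsT * bsA * bsT⁻¹ * bsA⁻¹ * bsA⁻¹ = 1 := h
  have h3 : bsT * bsA * bsT⁻¹ * (bsA * bsA)⁻¹ = 1 := by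
    rw [← h2]; group
  exact mul_inv_eq_one.mp h3

theorem bs_conj_zpow (m : ℤ) : bsT * bsA ^ m * bsT⁻¹ = bsA ^ (2 * m) := by
  rw [← conj_zpow, bs_rel]
  rw [← sq, ← zpow_natCast bsA 2, ← zpow_mul]
  norm_num

theorem bs_tpow_apow (k : ℕ) (m : ℤ) :
    bsT ^ k * bsA ^ m = bsA ^ (2 ^ k * m) * bsT ^ k := by
  induction k generalizing m with
  | zero => simp
  | succ n ih =>
    have : bsT ^ (n+1) * bsA ^ m = bsT ^ n * (bsT * bsA ^ m * bsT⁻¹) * bsT ^ (n+1) * (bsT ^ (n+1))⁻¹ * bsT := by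
      group
    rw [this, bs_conj_zpow]
    have : bsT ^ n * bsA ^ (2*m) * bsT ^ (n + 1) * (bsT ^ (n + 1))⁻¹ * bsT
        = bsT ^ n * bsA ^ (2*m) * bsT := by group
    rw [this, ih]
    rw [show (2:ℤ) ^ (n+1) * m = 2 ^ n * (2 * m) by ring]
    group

theorem bs_apow_tinv (k : ℕ) (m : ℤ) :
    bsA ^ m * (bsT ^ k)⁻¹ = (bsT ^ k)⁻¹ * bsA ^ (2 ^ k * m) := by
  have := bs_tpow_apow k m
  calc bsA ^ m * (bsT ^ k)⁻¹ = (bsT ^ k)⁻¹ * (bsT ^ k * bsA ^ m) * (bsT^k)⁻¹ := by group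
    _ = (bsT ^ k)⁻¹ * (bsA ^ (2^k*m) * bsT ^ k) * (bsT^k)⁻¹ := by rw [this]
    _ = (bsT ^ k)⁻¹ * bsA ^ (2 ^ k * m) := by group

theorem bs_normal_form (g : BS) :
    ∃ (p q : ℕ) (m : ℤ), g = (bsT ^ p)⁻¹ * bsA ^ m * bsT ^ q := by
  have hg : g ∈ Subgroup.closure (Set.range (PresentedGroup.of :
      Fin 2 → BS)) := by
    rw [PresentedGroup.closure_range_of]; trivial
  induction hg using Subgroup.closure_induction with
  | mem x hx =>
    obtain ⟨i, rfl⟩ := hx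
    fin_cases i
    · exact ⟨0, 0, 1, by simp [bsA]⟩
    · exact ⟨0, 1, 0, by simp [bsT]⟩
  | one => exact ⟨0, 0, 0, by simp⟩
  | inv x hx ih =>
    obtain ⟨p, q, m, rfl⟩ := ih
    exact ⟨q, p, -m, by group⟩
  | mul x y hx hy ihx ihy =>
    obtain ⟨p, q, m, rfl⟩ := ihx
    obtain ⟨r, s, n, rfl⟩ := ihy
    rcases le_or_gt r q with h | h
    · obtain ⟨d, rfl⟩ := Nat.exists_eq_add_of_le h
      refine ⟨p, d + s, m + 2 ^ d * n, ?_⟩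
      have key : bsT ^ d * bsA ^ n = bsA ^ (2 ^ d * n) * bsT ^ d := bs_tpow_apow d n
      calc (bsT ^ p)⁻¹ * bsA ^ m * bsT ^ (r + d) * ((bsT ^ r)⁻¹ * bsA ^ n * bsT ^ s)
          = (bsT ^ p)⁻¹ * bsA ^ m * (bsT ^ d * bsA ^ n) * bsT ^ s := by
            rw [pow_add]; group
        _ = (bsT ^ p)⁻¹ * bsA ^ m * (bsA ^ (2 ^ d * n) * bsT ^ d) * bsT ^ s := by rw [key]
        _ = (bsT ^ p)⁻¹ * bsA ^ (m + 2 ^ d * n) * bsT ^ (d + s) := by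
            rw [zpow_add, pow_add]; group
    · obtain ⟨d, rfl⟩ := Nat.exists_eq_add_of_le h.le
      refine ⟨p + d, s, 2 ^ d * m + n, ?_⟩
      have key : bsA ^ m * (bsT ^ d)⁻¹ = (bsT ^ d)⁻¹ * bsA ^ (2 ^ d * m) := bs_apow_tinv d m
      calc (bsT ^ p)⁻¹ * bsA ^ m * bsT ^ q * ((bsT ^ (q + d))⁻¹ * bsA ^ n * bsT ^ s)
          = (bsT ^ p)⁻¹ * (bsA ^ m * (bsT ^ d)⁻¹) * bsA ^ n * bsT ^ s := by
            rw [pow_add]; group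
        _ = (bsT ^ p)⁻¹ * ((bsT ^ d)⁻¹ * bsA ^ (2 ^ d * m)) * bsA ^ n * bsT ^ s := by rw [key]
        _ = (bsT ^ (p + d))⁻¹ * bsA ^ (2 ^ d * m + n) * bsT ^ s := by
            rw [zpow_add, pow_add]; group

noncomputable def bsPhi : BS →* Equiv.Perm ℚ :=
  PresentedGroup.toGroup
    (f := fun i : Fin 2 => if i = 0 then Equiv.addRight (1:ℚ)
      else Equiv.mulLeft₀ (2:ℚ) two_ne_zero)
    (by
      intro r hr
      simp only [Set.mem_singleton_iff] at hr
      subst hr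
      simp only [bsRel, map_mul, map_inv, FreeGroup.lift_apply_of]
      norm_num
      ext x
      simp only [Equiv.Perm.mul_apply, Equiv.Perm.inv_def, Equiv.coe_addRight,
        Equiv.mulLeft₀_symm_apply, Equiv.mulLeft₀_apply, Equiv.mulLeft₀_apply, Equiv.addRight_symm,
        Equiv.Perm.coe_one, id_eq]
      ring)

theorem bsPhi_a : bsPhi bsA = Equiv.addRight (1:ℚ) := by
  simp [bsPhi, bsA, PresentedGroup.toGroup.of]

theorem bsPhi_t : bsPhi bsT = Equiv.mulLeft₀ (2:ℚ) two_ne_zero := by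
  simp [bsPhi, bsT, PresentedGroup.toGroup.of]

theorem bsPhi_apow (m : ℤ) : ∀ x : ℚ, bsPhi (bsA ^ m) x = x + m := by
  induction m using Int.induction_on with
  | zero => simp
  | succ k ih =>
    intro x
    rw [zpow_add, zpow_one, map_mul, Equiv.Perm.mul_apply, bsPhi_a,
      Equiv.coe_addRight, ih (x + 1)]
    push_cast; ring
  | pred k ih =>
    intro x
    rw [show (-(k:ℤ) - 1) = (-k) + (-1) by ring, zpow_add, map_mul,
      Equiv.Perm.mul_apply]
    have h1 : bsPhi (bsA ^ (-1:ℤ)) x = x - 1 := by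
      rw [zpow_neg, zpow_one, map_inv, bsPhi_a, Equiv.Perm.inv_def,
        Equiv.addRight_symm, Equiv.coe_addRight]
      ring
    rw [h1, ih (x - 1)]
    push_cast; ring

theorem bsPhi_tpow (k : ℕ) : ∀ x : ℚ, bsPhi (bsT ^ k) x = 2 ^ k * x := by
  induction k with
  | zero => simp
  | succ n ih =>
    intro x
    rw [pow_succ, map_mul, Equiv.Perm.mul_apply, bsPhi_t, Equiv.mulLeft₀_apply,
      ih (2 * x)]
    ring

theorem bsPhi_tpow_inv (k : ℕ) (x : ℚ) : bsPhi ((bsT ^ k)⁻¹) x = x / 2 ^ k := by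
  have h2 : (2:ℚ)^k ≠ 0 := by positivity
  apply (bsPhi (bsT ^ k)).injective
  rw [show (bsPhi (bsT ^ k)) ((bsPhi ((bsT ^ k)⁻¹)) x) = x by
    rw [← Equiv.Perm.mul_apply, ← map_mul]; simp]
  rw [bsPhi_tpow]
  field_simp

theorem bsPhi_nf (p q : ℕ) (m : ℤ) (x : ℚ) :
    bsPhi ((bsT ^ p)⁻¹ * bsA ^ m * bsT ^ q) x = (2 ^ q * x + m) / 2 ^ p := by
  rw [map_mul, map_mul]
  simp only [Equiv.Perm.mul_apply]
  rw [bsPhi_tpow, bsPhi_apow, bsPhi_tpow_inv]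

theorem bsEps_a : bsEps bsA = 1 := by
  simp [bsEps, bsA, PresentedGroup.toGroup.of]

theorem bsEps_t : bsEps bsT = Multiplicative.ofAdd 1 := by
  simp [bsEps, bsT, PresentedGroup.toGroup.of]

theorem bsEps_nf (p q : ℕ) (m : ℤ) :
    bsEps ((bsT ^ p)⁻¹ * bsA ^ m * bsT ^ q) = Multiplicative.ofAdd ((q : ℤ) - p) := by
  rw [map_mul, map_mul, map_inv, map_pow, map_pow, map_zpow, bsEps_a, bsEps_t]
  simp only [one_zpow, mul_one, ← ofAdd_nsmul, nsmul_eq_mul, mul_one,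
    ← ofAdd_neg, ← ofAdd_add]
  congr 1
  ring

theorem bs_ker_nf {g : BS} (hg : g ∈ bsEps.ker) :
    ∃ (p : ℕ) (m : ℤ), g = (bsT ^ p)⁻¹ * bsA ^ m * bsT ^ p := by
  obtain ⟨p, q, m, rfl⟩ := bs_normal_form g
  have h := hg
  rw [MonoidHom.mem_ker, bsEps_nf] at h
  have : (q : ℤ) - p = 0 := by
    have := Multiplicative.toAdd.injective (by simpa using h)
    exact Multiplicative.ofAdd.injective (h.trans ofAdd_zero.symm)
  have hqp : q = p := by omega
  exact ⟨p, m, by rw [hqp]⟩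

theorem bsPhi_zero_dyadic (g : BS) : ∃ (m : ℤ) (n : ℕ), bsPhi g 0 = m / 2 ^ n := by
  obtain ⟨p, q, m, rfl⟩ := bs_normal_form g
  exact ⟨m, p, by rw [bsPhi_nf]; ring_nf⟩

theorem bs_ker_translation {g : BS} (hg : g ∈ bsEps.ker) (x : ℚ) :
    bsPhi g x = x + bsPhi g 0 := by
  obtain ⟨p, m, rfl⟩ := bs_ker_nf hg
  rw [bsPhi_nf, bsPhi_nf]
  have h2 : (2:ℚ)^p ≠ 0 := by positivity
  field_simp
  ring

theorem bs_ker_phi_injective {g : BS} (hg : g ∈ bsEps.ker) (h0 : bsPhi g 0 = 0) :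
    g = 1 := by
  obtain ⟨p, m, rfl⟩ := bs_ker_nf hg
  rw [bsPhi_nf] at h0
  have h2 : (2:ℚ)^p ≠ 0 := by positivity
  have hm : (m:ℚ) = 0 := by
    field_simp at h0
    simpa using h0
  have : m = 0 := by exact_mod_cast hm
  subst this
  group

noncomputable def bsPsi : Additive (bsEps.ker) →+ dyadic :=
  AddMonoidHom.mk'
    (fun g => ⟨bsPhi ((Additive.toMul g : bsEps.ker) : BS) 0,
      bsPhi_zero_dyadic _⟩)
    (by
      intro g h
      ext
      show bsPhi (((Additive.toMul g : bsEps.ker) : BS) *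
        ((Additive.toMul h : bsEps.ker) : BS)) 0
        = bsPhi ((Additive.toMul g : bsEps.ker) : BS) 0
          + bsPhi ((Additive.toMul h : bsEps.ker) : BS) 0
      rw [map_mul, Equiv.Perm.mul_apply,
        bs_ker_translation (Additive.toMul g : bsEps.ker).2]
      ring)

theorem bsPsi_bijective : Function.Bijective bsPsi := by
  constructor
  · rw [injective_iff_map_eq_zero]
    intro g hg
    have h0 : bsPhi ((Additive.toMul g : bsEps.ker) : BS) 0 = 0 := by
      have := congrArg Subtype.val hg
      exact this
    have := bs_ker_phi_injective (Additive.toMul g : bsEps.ker).2 h0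
    have h1 : (Additive.toMul g : bsEps.ker) = 1 := Subtype.ext this
    simpa using congrArg Additive.ofMul h1
  · rintro ⟨x, m, n, rfl⟩
    have hker : (bsT ^ n)⁻¹ * bsA ^ m * bsT ^ n ∈ bsEps.ker := by
      rw [MonoidHom.mem_ker, bsEps_nf]
      simp
    refine ⟨Additive.ofMul (⟨(bsT ^ n)⁻¹ * bsA ^ m * bsT ^ n, hker⟩ : bsEps.ker), ?_⟩
    ext
    show bsPhi ((bsT ^ n)⁻¹ * bsA ^ m * bsT ^ n) 0 = (m : ℚ) / 2 ^ n
    rw [bsPhi_nf]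
    ring_nf

theorem dyadic_bound (T : Finset ℚ) (hT : ∀ t ∈ T, ∃ m : ℤ, ∃ n : ℕ, t = m / 2 ^ n) :
    ∃ N : ℕ, ∀ t ∈ T, ∃ k : ℤ, t = k / 2 ^ N := by
  classical
  induction T using Finset.induction_on with
  | empty => exact ⟨0, by simp⟩
  | @insert a s ha ih =>
    obtain ⟨N₀, hN₀⟩ := ih (fun t ht => hT t (Finset.mem_insert_of_mem ht))
    obtain ⟨m, n, hmn⟩ := hT a (Finset.mem_insert_self a s)
    refine ⟨max n N₀, ?_⟩
    intro t ht
    rcases Finset.mem_insert.mp ht with rfl | ht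
    · refine ⟨m * 2 ^ (max n N₀ - n), ?_⟩
      rw [hmn]
      push_cast
      rw [div_eq_div_iff (by positivity) (by positivity), mul_assoc, ← pow_add]
      congr 2
      omega
    · obtain ⟨k, hk⟩ := hN₀ t ht
      refine ⟨k * 2 ^ (max n N₀ - N₀), ?_⟩
      rw [hk]
      push_cast
      rw [div_eq_div_iff (by positivity) (by positivity), mul_assoc, ← pow_add]
      congr 2
      omega

theorem dyadic_not_fg : ¬ AddGroup.FG dyadic := by
  intro h
  rw [AddGroup.fg_iff] at h
  obtain ⟨S, hS, hSfin⟩ := h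
  set T : Set ℚ := (dyadic.subtype) '' S with hTdef
  have hTfin : T.Finite := hSfin.image _
  have hT : ∀ t ∈ hTfin.toFinset, ∃ m : ℤ, ∃ n : ℕ, t = m / 2 ^ n := by
    intro t ht
    rw [Set.Finite.mem_toFinset] at ht
    obtain ⟨⟨x, hx⟩, _, rfl⟩ := ht
    exact hx
  obtain ⟨N, hN⟩ := dyadic_bound hTfin.toFinset hT
  have hclos : ∀ x : dyadic, (x : ℚ) ∈ AddSubgroup.closure T := by
    intro x
    have : x ∈ AddSubgroup.closure S := hS ▸ AddSubgroup.mem_top x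
    have : (dyadic.subtype) x ∈ (AddSubgroup.closure S).map dyadic.subtype :=
      AddSubgroup.mem_map_of_mem _ this
    rwa [AddMonoidHom.map_closure] at this
  have hle : AddSubgroup.closure T ≤ AddSubgroup.zmultiples ((2 : ℚ) ^ N)⁻¹ := by
    rw [AddSubgroup.closure_le]
    intro t ht
    obtain ⟨k, hk⟩ := hN t (hTfin.mem_toFinset.mpr ht)
    rw [SetLike.mem_coe, AddSubgroup.mem_zmultiples_iff]
    exact ⟨k, by rw [hk]; simp [zsmul_eq_mul, div_eq_mul_inv]⟩
  have hx : ((2 : ℚ) ^ (N + 1))⁻¹ ∈ dyadic := ⟨1, N + 1, by norm_num⟩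
  have := hle (hclos ⟨_, hx⟩)
  rw [AddSubgroup.mem_zmultiples_iff] at this
  obtain ⟨k, hk⟩ := this
  rw [zsmul_eq_mul] at hk
  have hN1 : (2 : ℚ) ^ N ≠ 0 := by positivity
  have hN2 : (2 : ℚ) ^ (N + 1) ≠ 0 := by positivity
  have hk' : (k : ℚ) * ((2 : ℚ) ^ N)⁻¹ = ((2 : ℚ) ^ (N + 1))⁻¹ := hk
  have h3 : ((k : ℚ) * ((2 : ℚ) ^ N)⁻¹) * 2 ^ (N + 1)
      = ((2 : ℚ) ^ (N + 1))⁻¹ * 2 ^ (N + 1) := by rw [hk']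
  rw [inv_mul_cancel₀ hN2, pow_succ] at h3
  have h2 : (k : ℚ) * 2 = 1 := by
    calc (k : ℚ) * 2 = (k : ℚ) * ((2 : ℚ) ^ N)⁻¹ * ((2 : ℚ) ^ N * 2) := by
          field_simp
      _ = 1 := h3
  have h4 : ((2 * k : ℤ) : ℚ) = 1 := by push_cast; linarith
  have : (2 * k : ℤ) = 1 := by exact_mod_cast h4
  omega

/-- the kernel of `ε : BS(1,2) → ℤ`, `a ↦ 0`, `t ↦ 1`, is isomorphic as a
group to the additive group of dyadic rationals `ℤ[1/2]`; in particular it is not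
finitely generated. -/
theorem bs_kernel_iso_dyadic :
    Nonempty (Additive bsEps.ker ≃+ dyadic) ∧ ¬ Group.FG bsEps.ker := by
  refine ⟨⟨AddEquiv.ofBijective bsPsi bsPsi_bijective⟩, ?_⟩
  intro h
  have h1 : AddGroup.FG (Additive bsEps.ker) := GroupFG.iff_add_fg.mp h
  have h2 : AddGroup.FG dyadic := AddGroup.fg_of_surjective bsPsi_bijective.2
  exact dyadic_not_fg h2
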